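/- Let Q : ℤ × {0,1} → ℝ≥0 be finitely supported with each marginal summing to 1/2, and suppose the sign-consistency condition holds: Q(t,0) ≥ Q(-t,0) for all t > 0, with strict inequality for at least one t > 0. Define Z(ξ) = 2·Σ_t Q(t,0)·ξ^t for ξ ∈ (0,1]. Then there exists ξ₀ ∈ (0,1) with Z(ξ₀) < 1. (The proof uses Z(1) = 1 and dZ/dξ at ξ = 1 being strictly positive.) -/
import Mathlib


/-- Under sign consistency, the Bhattacharyya-like parameter `Z(ξ) = 2·Σ_t Q(t,0)·ξ^t`
drops below `1` for some `ξ₀ ∈ (0,1)`. -/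
theorem exists_xi_Z_lt_one (Q : ℤ → Bool → ℝ)
    (hnn : ∀ t u, 0 ≤ Q t u)
    (hfin : (Function.support fun p : ℤ × Bool => Q p.1 p.2).Finite)
    (hmarg : ∀ u : Bool, ∑' t : ℤ, Q t u = 1 / 2)
    (hsign : ∀ t : ℤ, 0 < t → Q (-t) false ≤ Q t false)
    (hstrict : ∃ t : ℤ, 0 < t ∧ Q (-t) false < Q t false) :
    ∃ ξ₀ : ℝ, 0 < ξ₀ ∧ ξ₀ < 1 ∧ 2 * (∑' t : ℤ, Q t false * ξ₀ ^ t) < 1 := by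
  classical
  obtain ⟨t₀, ht₀pos, ht₀⟩ := hstrict
  have hQfin : (Function.support fun t => Q t false).Finite := by
    apply (hfin.image Prod.fst).subset
    intro t ht
    exact ⟨(t, false), ht, rfl⟩
  set T : Finset ℤ := hQfin.toFinset ∪ {t₀} with hT
  set s : Finset ℤ := T ∪ T.image (fun a => -a) with hs
  have hiff : ∀ t : ℤ, t ∈ s ↔ t ∈ T ∨ -t ∈ T := by
    intro t
    simp only [hs, Finset.mem_union, Finset.mem_image]
    constructor
    · rintro (h | ⟨a, ha, rfl⟩)
      · exact Or.inl h
      · right; simpa using ha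
    · rintro (h | h)
      · exact Or.inl h
      · exact Or.inr ⟨-t, h, by ring⟩
  have hsymm : ∀ t : ℤ, t ∈ s ↔ -t ∈ s := by
    intro t
    rw [hiff, hiff, neg_neg]
    tauto
  have hmem : ∀ t : ℤ, Q t false ≠ 0 → t ∈ s := by
    intro t ht
    rw [hiff]
    left
    simp [hT, Set.Finite.mem_toFinset, Function.mem_support, ht]
  have ht₀s : t₀ ∈ s := by
    rw [hiff]; left; simp [hT]
  -- the finite-sum version of Z
  set f : ℝ → ℝ := fun ξ => 2 * ∑ t ∈ s, Q t false * ξ ^ t with hf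
  have hzero : ∀ (ξ : ℝ), ∀ t ∉ s, Q t false * ξ ^ t = 0 := by
    intro ξ t ht
    have : Q t false = 0 := by
      by_contra h
      exact ht (hmem t h)
    rw [this, zero_mul]
  have htsum : ∀ ξ : ℝ, (∑' t : ℤ, Q t false * ξ ^ t) = ∑ t ∈ s, Q t false * ξ ^ t :=
    fun ξ => tsum_eq_sum (hzero ξ)
  -- f 1 = 1
  have hf1 : f 1 = 1 := by
    have h1 : (∑' t : ℤ, Q t false * (1:ℝ) ^ t) = ∑ t ∈ s, Q t false * (1:ℝ) ^ t :=
      htsum 1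
    have h2 : (∑' t : ℤ, Q t false * (1:ℝ) ^ t) = ∑' t : ℤ, Q t false := by
      congr 1; funext t; rw [one_zpow, mul_one]
    have := hmarg false
    simp only [hf]
    rw [← h1, h2, this]
    norm_num
  -- the derivative of f at 1
  set d : ℝ := 2 * ∑ t ∈ s, Q t false * (t : ℝ) with hd
  have hderiv : HasDerivAt f d 1 := by
    have h : ∀ t ∈ s, HasDerivAt (fun ξ : ℝ => Q t false * ξ ^ t)
        (Q t false * (t : ℝ)) 1 := by
      intro t _
      have := (hasDerivAt_zpow t (1 : ℝ) (Or.inl one_ne_zero)).const_mul (Q t false)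
      simpa using this
    have hsum := HasDerivAt.sum h
    simpa [hf, hd] using hsum.const_mul (2 : ℝ)
  -- d > 0 by the pairing argument
  have hdpos : 0 < d := by
    have hre : ∑ t ∈ s, Q (-t) false * (-t : ℤ) = ∑ t ∈ s, Q t false * (t : ℝ) := by
      apply Finset.sum_equiv (Equiv.neg ℤ) (fun i => hsymm i)
      intro i _
      simp
    have hpair : 0 < ∑ t ∈ s, (Q t false * (t : ℝ) + Q (-t) false * (-t : ℤ)) := by
      apply Finset.sum_pos'
      · intro t _
        rcases lt_trichotomy t 0 with h | h | h
        · have hq : Q t false ≤ Q (-t) false := by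
            have := hsign (-t) (by omega)
            simpa using this
          have ht' : (t : ℝ) ≤ 0 := by exact_mod_cast h.le
          push_cast
          nlinarith
        · subst h; simp
        · have hq := hsign t h
          have ht' : (0:ℝ) ≤ t := by exact_mod_cast h.le
          push_cast
          nlinarith
      · refine ⟨t₀, ht₀s, ?_⟩
        have ht' : (0:ℝ) < t₀ := by exact_mod_cast ht₀pos
        push_cast
        nlinarith
    rw [Finset.sum_add_distrib, hre] at hpair
    rw [hd]
    linarith
  -- use the slope characterization
  have hslope : Filter.Tendsto (slope f 1) (nhdsWithin 1 {(1:ℝ)}ᶜ) (nhds d) :=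
    hasDerivAt_iff_tendsto_slope.mp hderiv
  have hmono : nhdsWithin (1:ℝ) (Set.Iio 1) ≤ nhdsWithin 1 {(1:ℝ)}ᶜ :=
    nhdsWithin_mono _ (fun x hx => ne_of_lt hx)
  have h1 : ∀ᶠ ξ in nhdsWithin (1:ℝ) (Set.Iio 1), 0 < slope f 1 ξ :=
    (hslope.mono_left hmono).eventually (eventually_gt_nhds hdpos)
  have h2 : ∀ᶠ ξ in nhdsWithin (1:ℝ) (Set.Iio 1), ξ ∈ Set.Ioo (0:ℝ) 1 :=
    Ioo_mem_nhdsLT_of_mem (by norm_num)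
  obtain ⟨ξ₀, hpos, hmemIoo⟩ := (h1.and h2).exists
  refine ⟨ξ₀, hmemIoo.1, hmemIoo.2, ?_⟩
  rw [slope_def_field] at hpos
  have hden : ξ₀ - 1 < 0 := by linarith [hmemIoo.2]
  have hnum : f ξ₀ - f 1 < 0 := by
    rcases div_pos_iff.mp hpos with ⟨_, h⟩ | ⟨h, _⟩
    · linarith
    · exact h
  rw [htsum ξ₀]
  have : f ξ₀ < 1 := by rw [← hf1]; linarith
  simpa [hf] using this
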